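/- For every edge set F of a hypergraph G, bw_G(clos(F)) ≤ bw_G(F), where clos(F) is the set of all hyperedges of G contained in V(F). -/

import Mathlib

open Finset

universe u

/-- Rooted binary trees whose leaves carry labels of type `α`.  Every node has
at most two children; each leaf carries the edge assigned to it, so the leaf
map `φ` is built into the tree. -/
inductive BTree (α : Type u) : Type u where
  | leaf : α → BTree α
  | node1 : BTree α → BTree α
  | node2 : BTree α → BTree α → BTree α

namespace BTree

variable {α : Type u}

/-- The multiset of labels of the leaves of a tree. -/
def leafLabels : BTree α → Multiset α
  | leaf a => {a}
  | node1 c => leafLabels c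
  | node2 c₁ c₂ => leafLabels c₁ + leafLabels c₂

/-- `s.Occurs t` : `s` is (the subtree rooted at) a node of `t`. -/
def Occurs (s : BTree α) : BTree α → Prop
  | leaf a => s = leaf a
  | node1 c => s = node1 c ∨ Occurs s c
  | node2 c₁ c₂ => s = node2 c₁ c₂ ∨ Occurs s c₁ ∨ Occurs s c₂

/-- A tree is full if every internal node has exactly two children. -/
def IsFull : BTree α → Prop
  | leaf _ => True
  | node1 _ => False
  | node2 c₁ c₂ => IsFull c₁ ∧ IsFull c₂

/-- The list of all (subtrees rooted at) nodes of a tree. -/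
def nodes : BTree α → List (BTree α)
  | leaf a => [leaf a]
  | node1 c => node1 c :: nodes c
  | node2 c₁ c₂ => node2 c₁ c₂ :: (nodes c₁ ++ nodes c₂)

end BTree

variable {V : Type u} [DecidableEq V] [Fintype V]

/-- `vtxs F` is `V(F)` : the union of the hyperedges in `F`. -/
def vtxs (F : Finset (Finset V)) : Finset V := F.sup id

/-- The boundary `∂(F) = V(F) ∩ V(E ∖ F)` of an edge set `F` of the hypergraph
with edge set `E`. -/
def ebnd (E F : Finset (Finset V)) : Finset V := vtxs F ∩ vtxs (E \ F)

/-- `t` is a (relaxed) branch-decomposition of the edge set `F` : the set of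
leaf labels is exactly `F`, i.e. the leaf map is a surjection onto `F`. -/
def IsBD (F : Finset (Finset V)) (t : BTree (Finset V)) : Prop :=
  t.leafLabels.toFinset = F

/-- The lower edge set `L(p)` of a node `p` : the edges assigned to the leaves
in the subtree rooted at `p`. -/
def lowerSet (p : BTree (Finset V)) : Finset (Finset V) := p.leafLabels.toFinset

/-- The upper edge set `U(p)` of a node `p` of a branch-decomposition `t` of
`F` in the hypergraph with edge set `E` : the edges assigned to leaves outside
the subtree rooted at `p`, together with `E ∖ F`. -/
def upperSet (E F : Finset (Finset V)) (t p : BTree (Finset V)) : Finset (Finset V) :=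
  (t.leafLabels - p.leafLabels).toFinset ∪ (E \ F)

/-- The middle set `V(L(p)) ∩ V(U(p))` of a node `p`. -/
def midSet (E F : Finset (Finset V)) (t p : BTree (Finset V)) : Finset V :=
  vtxs (lowerSet p) ∩ vtxs (upperSet E F t p)

/-- The width of a branch-decomposition: the maximum order of a node. -/
def bdWidth (E F : Finset (Finset V)) (t : BTree (Finset V)) : ℕ :=
  (t.nodes.map (fun p => (midSet E F t p).card)).foldr max 0

/-- The branchwidth `bw_G(F)` of an edge set `F` of the hypergraph with edge
set `E` : the minimum width of a branch-decomposition of `F`. -/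
noncomputable def ebw (E F : Finset (Finset V)) : ℕ :=
  sInf {w | ∃ t : BTree (Finset V), IsBD F t ∧ bdWidth E F t = w}

/-- The branchwidth of a hypergraph given by its edge set. -/
noncomputable def hbw (E : Finset (Finset V)) : ℕ := ebw E E

/-- `clos(F)` : the set of hyperedges of `G` contained in `V(F)`. -/
def eclos (E F : Finset (Finset V)) : Finset (Finset V) :=
  E.filter (fun e => e ⊆ vtxs F)


namespace BTree

theorem self_mem_nodes (t : BTree α) : t ∈ t.nodes := by
  cases t <;> simp [nodes]

theorem leafLabels_le_of_mem_nodes {p t : BTree α} (h : p ∈ t.nodes) :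
    p.leafLabels ≤ t.leafLabels := by
  induction t with
  | leaf a => simp [nodes] at h; subst h; exact le_rfl
  | node1 c ih =>
    simp [nodes] at h
    rcases h with h | h
    · subst h; exact le_rfl
    · exact ih h
  | node2 c₁ c₂ ih1 ih2 =>
    simp [nodes] at h
    rcases h with h | h | h
    · subst h; exact le_rfl
    · exact le_trans (ih1 h) (Multiset.le_add_right _ _)
    · exact le_trans (ih2 h) (Multiset.le_add_left _ _)

/-- A caterpillar tree with leaves `a :: l`. -/
def ofList (a : α) : List α → BTree α
  | [] => leaf a
  | b :: l => node2 (leaf a) (ofList b l)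

theorem leafLabels_ofList (a : α) (l : List α) :
    (ofList a l).leafLabels = (a :: l : List α) := by
  induction l generalizing a with
  | nil => simp [ofList, leafLabels]
  | cons b l ih => simp [ofList, leafLabels, ih]

end BTree

theorem le_foldr_max {a : ℕ} {l : List ℕ} (h : a ∈ l) : a ≤ l.foldr max 0 := by
  induction l with
  | nil => simp at h
  | cons b l ih =>
    rcases List.mem_cons.mp h with h | h
    · subst h; exact le_max_left _ _
    · exact le_trans (ih h) (le_max_right _ _)

theorem foldr_max_le {l : List ℕ} {W : ℕ} (h : ∀ a ∈ l, a ≤ W) :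
    l.foldr max 0 ≤ W := by
  induction l with
  | nil => exact Nat.zero_le _
  | cons b l ih => exact max_le (h b List.mem_cons_self) (ih fun a ha => h a (List.mem_cons_of_mem _ ha))

theorem exists_tree_of_nonempty {α : Type u} [DecidableEq α] {S : Finset α}
    (hS : S.Nonempty) : ∃ t : BTree α, t.leafLabels.toFinset = S := by
  obtain ⟨a, l, hl⟩ : ∃ a l, S.toList = a :: l := by
    rcases List.exists_cons_of_ne_nil (Finset.Nonempty.toList_ne_nil hS) with ⟨a, l, h⟩
    exact ⟨a, l, h⟩
  refine ⟨BTree.ofList a l, ?_⟩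
  rw [BTree.leafLabels_ofList, ← hl, Finset.coe_toList, Finset.val_toFinset]

theorem vtxs_mono {A B : Finset (Finset V)} (h : A ⊆ B) : vtxs A ⊆ vtxs B := by
  intro v hv
  rw [vtxs, Finset.mem_sup] at hv ⊢
  rcases hv with ⟨e, he, hve⟩
  exact ⟨e, h he, hve⟩

theorem card_mid_le_width {E F : Finset (Finset V)} {t p : BTree (Finset V)}
    (hp : p ∈ t.nodes) : (midSet E F t p).card ≤ bdWidth E F t :=
  le_foldr_max (List.mem_map.mpr ⟨p, hp, rfl⟩)


/-- For every edge set `F` of a hypergraph, `bw(clos(F)) ≤ bw(F)`. -/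
theorem bw_clos_le (E F : Finset (Finset V)) (hFE : F ⊆ E)
    (hne : ∀ e ∈ E, e.Nonempty) :
    ebw E (eclos E F) ≤ ebw E F := by
  classical
  by_cases hcl : eclos E F = F
  · rw [hcl]
  · -- F ⊆ eclos E F
    have hFF' : F ⊆ eclos E F := fun f hf =>
      Finset.mem_filter.mpr ⟨hFE hf, Finset.le_sup (f := id) hf⟩
    have hF'E : eclos E F ⊆ E := Finset.filter_subset _ _
    set F' := eclos E F with hF'
    -- D nonempty
    have hD : (F' \ F).Nonempty := by
      rw [Finset.sdiff_nonempty]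
      intro h
      exact hcl (le_antisymm h hFF')
    -- F nonempty
    have hFne : F.Nonempty := by
      rcases hD with ⟨e, he⟩
      rw [Finset.mem_sdiff] at he
      have heE : e ∈ E := hF'E he.1
      have hesub : e ⊆ vtxs F := (Finset.mem_filter.mp he.1).2
      rcases hne e heE with ⟨v, hv⟩
      have : v ∈ vtxs F := hesub hv
      rcases Finset.mem_sup.mp this with ⟨f, hf, _⟩
      exact ⟨f, hf⟩
    -- the set defining ebw E F is nonempty
    have hSne : {w | ∃ t : BTree (Finset V), IsBD F t ∧ bdWidth E F t = w}.Nonempty := by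
      rcases exists_tree_of_nonempty hFne with ⟨t, ht⟩
      exact ⟨bdWidth E F t, t, ht, rfl⟩
    obtain ⟨t, ht, htw⟩ := Nat.sInf_mem hSne
    have hEF : ebw E F = bdWidth E F t := htw.symm
    rw [hEF]
    -- build the tree s for D
    obtain ⟨s, hs⟩ := exists_tree_of_nonempty hD
    set t' := BTree.node2 t s with ht'def
    have hll : t'.leafLabels = t.leafLabels + s.leafLabels := rfl
    -- facts about edges of D
    have hDsub : ∀ e ∈ F' \ F, e ⊆ vtxs F ∩ vtxs (E \ F) := by
      intro e he
      rw [Finset.mem_sdiff] at he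
      have h1 : e ⊆ vtxs F := (Finset.mem_filter.mp he.1).2
      have h2 : e ⊆ vtxs (E \ F) :=
        Finset.le_sup (f := id) (Finset.mem_sdiff.mpr ⟨hF'E he.1, he.2⟩)
      exact Finset.subset_inter h1 h2
    have hvF' : vtxs F' = vtxs F := by
      apply le_antisymm
      · apply Finset.sup_le
        intro e he
        exact (Finset.mem_filter.mp he).2
      · exact Finset.sup_mono hFF'
    -- midSet of root of t
    have hrootmid : midSet E F t t = vtxs F ∩ vtxs (E \ F) := by
      have h1 : lowerSet t = F := ht
      have h2 : upperSet E F t t = E \ F := by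
        rw [upperSet, tsub_self]
        simp
      rw [midSet, h1, h2]
    have hrootcard : (vtxs F ∩ vtxs (E \ F)).card ≤ bdWidth E F t := by
      rw [← hrootmid]; exact card_mid_le_width (BTree.self_mem_nodes t)
    -- t' is a BD of F'
    have hBD' : IsBD F' t' := by
      rw [IsBD, hll, Multiset.toFinset_add, ht, hs]
      rw [Finset.union_comm, Finset.sdiff_union_of_subset hFF']
    refine le_trans (Nat.sInf_le ⟨t', hBD', rfl⟩) ?_
    -- width bound
    apply foldr_max_le
    intro a ha
    rcases List.mem_map.mp ha with ⟨p, hp, rfl⟩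
    have hpcases : p = t' ∨ p ∈ t.nodes ∨ p ∈ s.nodes := by
      simpa [BTree.nodes, ht'def] using hp
    rcases hpcases with hcase | hcase | hcase
    · -- root of t'
      subst hcase
      have h1 : lowerSet t' = F' := hBD'
      have h2 : upperSet E F' t' t' = E \ F' := by
        rw [upperSet, tsub_self]; simp
      have hsub : midSet E F' t' t' ⊆ vtxs F ∩ vtxs (E \ F) := by
        rw [midSet, h1, h2, hvF']
        have h3 : vtxs (E \ F') ⊆ vtxs (E \ F) :=
          vtxs_mono (Finset.sdiff_subset_sdiff (Finset.Subset.refl E) hFF')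
        exact Finset.inter_subset_inter (Finset.Subset.refl _) h3
      exact le_trans (Finset.card_le_card hsub) hrootcard
    · -- node of t : middle set unchanged
      have hple : p.leafLabels ≤ t.leafLabels := BTree.leafLabels_le_of_mem_nodes hcase
      have hups : upperSet E F' t' p = upperSet E F t p := by
        rw [upperSet, upperSet, hll, ← tsub_add_eq_add_tsub hple, add_comm,
          Multiset.toFinset_add, hs]
        ext e
        simp only [Finset.mem_union, Finset.mem_sdiff]
        constructor
        · rintro ((⟨h1, h2⟩ | h1) | ⟨h1, h2⟩)
          · exact Or.inr ⟨hF'E h1, h2⟩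
          · exact Or.inl h1
          · exact Or.inr ⟨h1, fun hf => h2 (hFF' hf)⟩
        · rintro (h1 | ⟨h1, h2⟩)
          · exact Or.inl (Or.inr h1)
          · by_cases h3 : e ∈ F'
            · exact Or.inl (Or.inl ⟨h3, h2⟩)
            · exact Or.inr ⟨h1, h3⟩
      have : midSet E F' t' p = midSet E F t p := by rw [midSet, midSet, hups]
      rw [this]
      exact card_mid_le_width hcase
    · -- node of s
      have hple : p.leafLabels ≤ s.leafLabels := BTree.leafLabels_le_of_mem_nodes hcase
      have hlow : lowerSet p ⊆ F' \ F := by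
        rw [lowerSet, ← hs]
        exact Multiset.toFinset_subset.mpr (Multiset.subset_of_le hple)
      have hsub : midSet E F' t' p ⊆ vtxs F ∩ vtxs (E \ F) := by
        refine le_trans (Finset.inter_subset_left) ?_
        apply Finset.sup_le
        intro e he
        exact hDsub e (hlow he)
      exact le_trans (Finset.card_le_card hsub) hrootcard
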